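/- Let T be a triangulated category with a bounded t-structure, G an object of T, and d a positive integer. Then there exists an integer N = N(d) > 0 such that for every integer a and every object F of coprod_d(G(-∞,∞)), there exist an object F' in coprod_d(G(-∞,∞)) ∩ T^{≥ a - N} and a morphism F → F' which induces isomorphisms on H^n for all n ≥ a. -/

import Mathlib

/-!
Common preamble: generation in triangulated categories, truncation triangles for
t-structures, "isomorphism in degrees ≥ a", levels `⟨G⟩_n`, `coprod_n`,
and Rouquier dimension.
-/

open CategoryTheory Limits Pretriangulated Triangulated

namespace RouquierApprox

variable {C : Type*} [Category C] [Preadditive C] [HasZeroObject C] [HasShift C ℤ]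
  [∀ (n : ℤ), (shiftFunctor C n).Additive] [Pretriangulated C]

/-- A t-structure is non-degenerate if `⋂ₙ T^{≥n} = 0 = ⋂ₙ T^{≤-n}`. -/
def IsNonDegenerate (t : TStructure C) : Prop :=
  (∀ X : C, (∀ n : ℤ, t.ge n X) → IsZero X) ∧ (∀ X : C, (∀ n : ℤ, t.le n X) → IsZero X)

/-- A t-structure is bounded if every object is bounded. -/
def IsBoundedTStructure (t : TStructure C) : Prop :=
  ∀ X : C, ∃ n : ℤ, 0 < n ∧ t.le n X ∧ t.ge (-n) X

/-- A choice of truncation triangle `τ_{≤ a-1} A ⟶ A ⟶ τ_{≥ a} A ⟶ (τ_{≤ a-1} A)[1]`. -/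
structure TruncGETriangle (t : TStructure C) (a : ℤ) (A : C) where
  left : C
  right : C
  left_le : t.le (a - 1) left
  right_ge : t.ge a right
  ι : left ⟶ A
  π : A ⟶ right
  δ : right ⟶ left⟦(1 : ℤ)⟧
  dist : Triangle.mk ι π δ ∈ distTriang C

/-- `f : A ⟶ B` induces isomorphisms on the cohomology objects `H^n` (with respect to
the t-structure `t`) for all `n ≥ a`; for a non-degenerate t-structure this is
equivalently expressed by saying that any morphism induced by `f` between the
truncations `τ_{≥ a} A ⟶ τ_{≥ a} B` is an isomorphism. -/
def IsIsoInDegreesGE (t : TStructure C) (a : ℤ) {A B : C} (f : A ⟶ B) : Prop :=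
  ∀ (TA : TruncGETriangle t a A) (TB : TruncGETriangle t a B) (g : TA.right ⟶ TB.right),
    TA.π ≫ g = f ≫ TB.π → IsIso g

/-- `P` is a retract (direct summand) of `F`. -/
def IsRetract (P F : C) : Prop := ∃ (i : P ⟶ F) (r : F ⟶ P), i ≫ r = 𝟙 P

/-- Finite coproducts of shifts of objects of `S`. -/
def finCoprodShifts (S : Set C) : Set C :=
  {X | ∃ (k : ℕ) (obj : Fin k → C) (s : Fin k → ℤ),
    (∀ i, obj i ∈ S) ∧ Nonempty (X ≅ ⨁ (fun i => (obj i)⟦s i⟧))}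

/-- `add S`: retracts of finite coproducts of shifts of objects of `S`, i.e. the
closure of `S` under shifts, finite coproducts and retracts. -/
def addSet (S : Set C) : Set C := {X | ∃ F ∈ finCoprodShifts S, IsRetract X F}

/-- Cones of morphisms from an object of `S` to an object of `T`. -/
def coneSet (S T : Set C) : Set C :=
  {Z | ∃ (A B : C) (f : A ⟶ B) (g : B ⟶ Z) (h : Z ⟶ A⟦(1 : ℤ)⟧),
    A ∈ S ∧ B ∈ T ∧ Triangle.mk f g h ∈ distTriang C}

/-- The level filtration `⟨G⟩_n`: `⟨G⟩_0` consists of zero objects, `⟨G⟩_1 = add G`,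
and `⟨G⟩_n = add (cones of maps from ⟨G⟩_{n-1} to ⟨G⟩_1)`. -/
def levelSet (G : C) : ℕ → Set C
  | 0 => {X | IsZero X}
  | 1 => addSet {G}
  | (n+2) => addSet (coneSet (levelSet G (n+1)) (addSet {G}))

/-- `coprod_n (G(-∞,∞))`: as `levelSet` but without retracts. -/
def coprodLevel (G : C) : ℕ → Set C
  | 0 => {X | IsZero X}
  | 1 => finCoprodShifts {G}
  | (n+2) => coneSet (coprodLevel G (n+1)) (finCoprodShifts {G})

/-- The level of `E` with respect to `G`: the minimal `n` with `E ∈ ⟨G⟩_n`. -/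
noncomputable def levelOf (G E : C) : ℕ∞ :=
  sInf {n : ℕ∞ | ∃ k : ℕ, n = k ∧ E ∈ levelSet G k}

/-- The Rouquier dimension of a (strictly full triangulated) subcategory `S` of `C`,
with levels computed in the ambient category: the least `d` such that
`S ⊆ ⟨G⟩_{d+1}` for some `G ∈ S`. -/
noncomputable def relRouquierDim (S : Set C) : ℕ∞ :=
  sInf {d : ℕ∞ | ∃ (k : ℕ) (G : C), G ∈ S ∧ d = k ∧ S ⊆ levelSet G (k + 1)}

/-- `G` is a strong generator of the (strictly full triangulated) subcategory `S`. -/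
def IsStrongGeneratorOf (S : Set C) (G : C) : Prop :=
  G ∈ S ∧ ∃ n : ℕ, S ⊆ levelSet G n

/-- A morphism `ψ : K ⟶ L` is `G`-ghost if every composition `G⟦n⟧ ⟶ K ⟶ L` vanishes. -/
def IsGhost (G : C) {K L : C} (ψ : K ⟶ L) : Prop :=
  ∀ (n : ℤ) (φ : G⟦n⟧ ⟶ K), φ ≫ ψ = 0

end RouquierApprox

open CategoryTheory Limits Pretriangulated Triangulated RouquierApprox

namespace RouquierApprox

open Function

variable {C : Type*} [Category C] [Preadditive C] [HasZeroObject C] [HasShift C ℤ]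
  [∀ (n : ℤ), (shiftFunctor C n).Additive] [Pretriangulated C]

variable (t : TStructure C)

lemma homzero {X Y : C} (f : X ⟶ Y) {n₀ n₁ : ℤ} (hX : t.le n₀ X) (hY : t.ge n₁ Y)
    (h : n₀ < n₁) : f = 0 := by
  have hX' : t.le 0 (X⟦n₀⟧) := t.le_shift n₀ n₀ 0 (by omega) X hX
  have hY1 : t.ge (n₀ + 1) Y := t.ge_antitone (by omega) Y hY
  have hY' : t.ge 1 (Y⟦n₀⟧) := t.ge_shift (n₀ + 1) n₀ 1 (by omega) Y hY1
  have : (shiftFunctor C n₀).map f = 0 := t.zero' _ hX' hY'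
  apply (shiftFunctor C n₀).map_injective
  rw [this, Functor.map_zero]

lemma ge_of_small {Y : C} {n : ℤ}
    (h : ∀ (W : C), t.le (n - 1) W → ∀ f : W ⟶ Y, f = 0) : t.ge n Y := by
  obtain ⟨A, B, hA, hB, f, g, δ, mem⟩ := t.exists_triangle Y (n - 1) n (by omega)
  have hf : f = 0 := h A hA f
  have hA1 : t.le (n - 2) (A⟦(1:ℤ)⟧) := t.le_shift (n - 1) 1 (n - 2) (by omega) A hA
  -- the rotated triangle has mor₃ = -f⟦1⟧ = 0
  have hrot := rot_of_distTriang _ mem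
  obtain ⟨s, hs⟩ := Pretriangulated.Triangle.coyoneda_exact₃ _ hrot
    (𝟙 (A⟦(1:ℤ)⟧)) (by
      have e : (-(f⟦(1:ℤ)⟧')) = 0 := by rw [hf, Functor.map_zero, neg_zero]
      exact (congrArg (𝟙 (A⟦(1:ℤ)⟧) ≫ ·) e).trans comp_zero)
  have hs0 : s = 0 := homzero t s hA1 hB (by omega)
  have hzero : IsZero (A⟦(1:ℤ)⟧) := by
    rw [IsZero.iff_id_eq_zero, hs, hs0, zero_comp]; rfl
  -- hence `g : Y ⟶ B` is an isomorphism
  obtain ⟨r, hr⟩ := Pretriangulated.Triangle.yoneda_exact₂ _ mem (𝟙 Y) (by rw [hf]; exact zero_comp)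
  have hepi : Epi g :=
    (Pretriangulated.Triangle.mor₃_eq_zero_iff_epi₂ _ mem).1 (hzero.eq_of_tgt _ _)
  have hgr : g ≫ r = 𝟙 Y := hr.symm
  have hrg : r ≫ g = 𝟙 B := by
    apply hepi.left_cancellation
    exact (Category.assoc g r g).symm.trans ((congrArg (· ≫ g) hgr).trans ((Category.id_comp g).trans (Category.comp_id g).symm))
  have : IsIso g := ⟨r, hgr, hrg⟩
  exact (t.ge n).prop_of_iso (asIso g).symm hB

/-- `GE n` is closed under extensions. -/
lemma ge_ext (T : Triangle C) (hT : T ∈ distTriang C) {n : ℤ}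
    (h₁ : t.ge n T.obj₁) (h₃ : t.ge n T.obj₃) : t.ge n T.obj₂ := by
  apply ge_of_small t
  intro W hW f
  have h2 : f ≫ T.mor₂ = 0 := homzero t _ hW h₃ (by omega)
  obtain ⟨f', hf'⟩ := Pretriangulated.Triangle.coyoneda_exact₂ _ hT f h2
  rw [hf', homzero t f' hW h₁ (by omega), zero_comp]

lemma ge_biproduct {m : ℕ} (f : Fin m → C) {n : ℤ} (h : ∀ j, t.ge n (f j)) :
    t.ge n (⨁ f) := by
  apply ge_of_small t
  intro W hW g
  ext j
  rw [zero_comp]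
  exact homzero t _ hW (h j) (by omega)

/-- The key approximation property: `φ` induces bijections on `Hom(-, X)` for all
`X` in `T^{≥ a}`. -/
def W (t : TStructure C) (a : ℤ) {F F' : C} (φ : F ⟶ F') : Prop :=
  ∀ (X : C), t.ge a X → Function.Bijective (fun p : F' ⟶ X => φ ≫ p)

lemma W_mono {a a' : ℤ} (h : a' ≤ a) {F F' : C} {φ : F ⟶ F'} (hW : W t a' φ) :
    W t a φ :=
  fun X hX => hW X (t.ge_antitone h X hX)

lemma W_shift {a : ℤ} {F F' : C} {φ : F ⟶ F'} (hW : W t a φ) {X : C}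
    (hX : t.ge (a - 1) X) :
    Function.Bijective (fun p : F'⟦(1:ℤ)⟧ ⟶ X => φ⟦(1:ℤ)⟧' ≫ p) := by
  have hX' : t.ge a (X⟦(-1:ℤ)⟧) := t.ge_shift (a - 1) (-1) a (by omega) X hX
  let e : ∀ (Y : C), (Y⟦(1:ℤ)⟧ ⟶ X) ≃ (Y ⟶ X⟦(-1:ℤ)⟧) :=
    fun Y => (shiftEquiv C (1:ℤ)).toAdjunction.homEquiv Y X
  have comp : (fun p : F'⟦(1:ℤ)⟧ ⟶ X => φ⟦(1:ℤ)⟧' ≫ p)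
      = (e F).symm ∘ (fun q : F' ⟶ X⟦(-1:ℤ)⟧ => φ ≫ q) ∘ (e F') := by
    funext p
    apply (e F).injective
    simp only [Function.comp_apply, Equiv.apply_symm_apply]
    exact Adjunction.homEquiv_naturality_left _ _ _
  rw [comp]
  exact ((e F).symm.bijective.comp (hW _ hX')).comp (e F').bijective

lemma trunc_hom_bij {a : ℤ} {F : C} (TA : TruncGETriangle t a F) {X : C}
    (hX : t.ge a X) :
    Function.Bijective (fun p : TA.right ⟶ X => TA.π ≫ p) := by
  constructor
  · intro p p' hpp
    simp only at hpp
    have h0 : TA.π ≫ (p - p') = 0 := by rw [Preadditive.comp_sub, hpp, sub_self]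
    obtain ⟨s, hs⟩ := Pretriangulated.Triangle.yoneda_exact₃ _ TA.dist (p - p') h0
    have hs0 : s = 0 :=
      homzero t s (t.le_shift (a-1) 1 (a-2) (by omega) _ TA.left_le) hX (by omega)
    rw [hs0, comp_zero] at hs
    exact sub_eq_zero.mp hs
  · intro q
    have h0 : TA.ι ≫ q = 0 := homzero t _ TA.left_le hX (by omega)
    obtain ⟨p, hp⟩ := Pretriangulated.Triangle.yoneda_exact₂ _ TA.dist q h0
    exact ⟨p, hp.symm⟩

lemma W.isIsoInDegreesGE {a : ℤ} {F F' : C} {φ : F ⟶ F'} (hW : W t a φ) :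
    IsIsoInDegreesGE t a φ := by
  intro TA TB g hg
  obtain ⟨q, hq⟩ := (hW TA.right TA.right_ge).surjective TA.π
  obtain ⟨h, hh⟩ := (trunc_hom_bij t TB TA.right_ge).surjective q
  simp only at hq hh
  have hgh : g ≫ h = 𝟙 TA.right := by
    apply (trunc_hom_bij t TA TA.right_ge).injective
    show TA.π ≫ (g ≫ h) = TA.π ≫ 𝟙 _
    rw [Category.comp_id, ← Category.assoc, hg, Category.assoc, hh, hq]
  have hqg : q ≫ g = TB.π := by
    apply (hW TB.right TB.right_ge).injective
    show φ ≫ (q ≫ g) = φ ≫ TB.π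
    rw [← Category.assoc, hq, hg]
  have hhg : h ≫ g = 𝟙 TB.right := by
    apply (trunc_hom_bij t TB TB.right_ge).injective
    show TB.π ≫ (h ≫ g) = TB.π ≫ 𝟙 _
    rw [Category.comp_id, ← Category.assoc, hh, hqg]
  exact ⟨h, hgh, hhg⟩

/-- Five-lemma style stability of `W` under morphisms of distinguished triangles. -/
lemma W_step {a : ℤ} (T T' : Triangle C) (hT : T ∈ distTriang C) (hT' : T' ∈ distTriang C)
    (α : T.obj₁ ⟶ T'.obj₁) (ψ : T.obj₂ ⟶ T'.obj₂) (φ : T.obj₃ ⟶ T'.obj₃)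
    (sq₁ : T.mor₁ ≫ ψ = α ≫ T'.mor₁)
    (sq₂ : T.mor₂ ≫ φ = ψ ≫ T'.mor₂)
    (sq₃ : T.mor₃ ≫ α⟦(1:ℤ)⟧' = φ ≫ T'.mor₃)
    (hα : W t a α) (hψ : W t a ψ) : W t a φ := by
  intro X hX
  have hX1 : t.ge (a - 1) X := t.ge_antitone (by omega) X hX
  constructor
  · suffices h : ∀ p : T'.obj₃ ⟶ X, φ ≫ p = 0 → p = 0 by
      intro p p' hpp
      simp only at hpp
      have := h (p - p') (by rw [Preadditive.comp_sub, hpp, sub_self])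
      rwa [sub_eq_zero] at this
    intro p hp
    have h1 : T'.mor₂ ≫ p = 0 := by
      apply (hψ X hX).injective
      show ψ ≫ T'.mor₂ ≫ p = ψ ≫ 0
      rw [comp_zero, ← Category.assoc, ← sq₂, Category.assoc, hp, comp_zero]
    obtain ⟨s, hs⟩ := Pretriangulated.Triangle.yoneda_exact₃ _ hT' p h1
    have h2 : T.mor₃ ≫ (α⟦(1:ℤ)⟧' ≫ s) = 0 := by
      rw [← Category.assoc, sq₃, Category.assoc, ← hs, hp]
    obtain ⟨w, hw⟩ := Pretriangulated.Triangle.yoneda_exact₂ _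
      (rot_of_distTriang _ (rot_of_distTriang _ hT)) (α⟦(1:ℤ)⟧' ≫ s) h2
    obtain ⟨w', hw'⟩ := (W_shift t hψ hX1).surjective w
    simp only at hw'
    have h3 : α⟦(1:ℤ)⟧' ≫ (s + T'.mor₁⟦(1:ℤ)⟧' ≫ w') = 0 := by
      have e1 : α⟦(1:ℤ)⟧' ≫ T'.mor₁⟦(1:ℤ)⟧' ≫ w' = T.mor₁⟦(1:ℤ)⟧' ≫ w := by
        rw [← Category.assoc, ← Functor.map_comp, ← sq₁, Functor.map_comp,
          Category.assoc, hw']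
      rw [Preadditive.comp_add, e1]; refine (congrArg (· + T.mor₁⟦(1:ℤ)⟧' ≫ w) hw).trans ?_
      dsimp [Triangle.rotate]
      exact (congrArg (· + T.mor₁⟦(1:ℤ)⟧' ≫ w) (Preadditive.neg_comp _ _)).trans (neg_add_cancel _)
    have h4 : s + T'.mor₁⟦(1:ℤ)⟧' ≫ w' = 0 := by
      apply (W_shift t hα hX1).injective
      show α⟦(1:ℤ)⟧' ≫ _ = α⟦(1:ℤ)⟧' ≫ 0
      rw [h3, comp_zero]
    have h5 : s = -(T'.mor₁⟦(1:ℤ)⟧' ≫ w') := by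
      rw [add_eq_zero_iff_eq_neg] at h4; exact h4
    rw [hs, h5, Preadditive.comp_neg, ← Category.assoc, comp_distTriang_mor_zero₃₁ _ hT',
      zero_comp, neg_zero]
  · intro q
    obtain ⟨r, hr⟩ := (hψ X hX).surjective (T.mor₂ ≫ q)
    simp only at hr
    have h1 : T'.mor₁ ≫ r = 0 := by
      apply (hα X hX).injective
      show α ≫ T'.mor₁ ≫ r = α ≫ 0
      rw [comp_zero, ← Category.assoc, ← sq₁, Category.assoc, hr, ← Category.assoc,
        comp_distTriang_mor_zero₁₂ _ hT, zero_comp]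
    obtain ⟨p, hp⟩ := Pretriangulated.Triangle.yoneda_exact₂ _ hT' r h1
    have h2 : T.mor₂ ≫ (q - φ ≫ p) = 0 := by
      rw [Preadditive.comp_sub, ← Category.assoc, sq₂, Category.assoc, ← hp, hr, sub_self]
    obtain ⟨s, hs⟩ := Pretriangulated.Triangle.yoneda_exact₃ _ hT (q - φ ≫ p) h2
    obtain ⟨s', hs'⟩ := (W_shift t hα hX1).surjective s
    simp only at hs'
    refine ⟨p + T'.mor₃ ≫ s', ?_⟩
    show φ ≫ (p + T'.mor₃ ≫ s') = q
    rw [Preadditive.comp_add, ← Category.assoc, ← sq₃, Category.assoc, hs', ← hs]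
    abel

lemma base_approx {G : C} {n : ℤ} (hLE : t.le n G) (hGE : t.ge (-n) G)
    (a : ℤ) {F : C} (hF : F ∈ finCoprodShifts ({G} : Set C)) :
    ∃ (F' : C) (φ : F ⟶ F'), F' ∈ finCoprodShifts ({G} : Set C) ∧
      t.ge (a - (2*n+1)) F' ∧ W t a φ := by
  classical
  obtain ⟨k, obj, s, hobj, ⟨ε⟩⟩ := hF
  obtain rfl : obj = fun _ => G := funext fun i => hobj i
  set Srel : Finset (Fin k) := Finset.univ.filter (fun i => s i ≤ n - a) with hSrel
  let e : Fin Srel.card ≃o {x // x ∈ Srel} := Srel.orderIsoOfFin rfl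
  let idx : Fin Srel.card → Fin k := fun j => (e j : Fin k)
  have idx_inj : Function.Injective idx := fun j j' h => e.injective (Subtype.ext h)
  have idx_mem : ∀ j, s (idx j) ≤ n - a := fun j =>
    (Finset.mem_filter.1 (e j).2).2
  let ψ : (⨁ fun i : Fin k => G⟦s i⟧) ⟶ (⨁ fun j => G⟦s (idx j)⟧) :=
    biproduct.lift fun j => biproduct.π (fun i : Fin k => G⟦s i⟧) (idx j)
  let τ : (⨁ fun j => G⟦s (idx j)⟧) ⟶ (⨁ fun i : Fin k => G⟦s i⟧) :=
    biproduct.desc fun j => biproduct.ι (fun i : Fin k => G⟦s i⟧) (idx j)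
  have hτψ : τ ≫ ψ = 𝟙 _ := by
    apply biproduct.hom_ext
    intro j'
    rw [Category.assoc, biproduct.lift_π, Category.id_comp]
    apply biproduct.hom_ext'
    intro j
    rw [← Category.assoc, biproduct.ι_desc, biproduct.ι_π, biproduct.ι_π]
    by_cases h : j = j'
    · subst h; rw [dif_pos rfl, dif_pos rfl]
    · rw [dif_neg (fun hh => h (idx_inj hh)), dif_neg h]
  have hιψ : ∀ j, biproduct.ι (fun i : Fin k => G⟦s i⟧) (idx j) ≫ ψ
      = biproduct.ι (fun j' => G⟦s (idx j')⟧) j := by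
    intro j
    apply biproduct.hom_ext
    intro j'
    rw [Category.assoc, biproduct.lift_π, biproduct.ι_π, biproduct.ι_π]
    by_cases h : j = j'
    · subst h; rw [dif_pos rfl, dif_pos rfl]
    · rw [dif_neg (fun hh => h (idx_inj hh)), dif_neg h]
  have hWψ : W t a ψ := by
    intro X hX
    constructor
    · intro p p' hpp
      simp only at hpp
      have := congrArg (fun z => τ ≫ z) hpp
      simpa only [← Category.assoc, hτψ, Category.id_comp] using this
    · intro q
      refine ⟨τ ≫ q, ?_⟩
      show ψ ≫ τ ≫ q = q
      apply biproduct.hom_ext'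
      intro i
      by_cases hi : s i ≤ n - a
      · have hiS : i ∈ Srel := by rw [hSrel, Finset.mem_filter]; exact ⟨Finset.mem_univ i, hi⟩
        obtain ⟨j, hj⟩ : ∃ j, idx j = i := ⟨e.symm ⟨i, hiS⟩, by
          simp only [idx, OrderIso.apply_symm_apply]⟩
        subst hj
        rw [← Category.assoc, hιψ, ← Category.assoc, biproduct.ι_desc]
      · have h0 : biproduct.ι (fun i : Fin k => G⟦s i⟧) i ≫ ψ = 0 := by
          apply biproduct.hom_ext
          intro j
          rw [Category.assoc, biproduct.lift_π, biproduct.ι_π, zero_comp,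
            dif_neg (fun hh : i = idx j => hi (hh ▸ idx_mem j))]
        rw [← Category.assoc, h0, zero_comp]
        refine (homzero t _ ?_ hX (by omega : a - 1 < a)).symm
        have h1 : t.le (n - s i) (G⟦s i⟧) := t.le_shift n (s i) (n - s i) (by omega) G hLE
        exact t.le_monotone (by omega : n - s i ≤ a - 1) _ h1
  refine ⟨_, ε.hom ≫ ψ, ⟨Srel.card, fun _ => G, fun j => s (idx j), fun _ => rfl,
    ⟨Iso.refl _⟩⟩, ?_, ?_⟩
  · apply ge_biproduct
    intro j
    have h1 : t.ge (-n - s (idx j)) (G⟦s (idx j)⟧) :=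
      t.ge_shift (-n) (s (idx j)) (-n - s (idx j)) (by omega) G hGE
    exact t.ge_antitone (by have := idx_mem j; omega) _ h1
  · intro X hX
    have comp : (fun p : (⨁ fun j => G⟦s (idx j)⟧) ⟶ X => (ε.hom ≫ ψ) ≫ p)
        = (fun q : (⨁ fun i : Fin k => G⟦s i⟧) ⟶ X => ε.hom ≫ q) ∘
          (fun p => ψ ≫ p) := by
      funext p; simp
    rw [comp]
    refine Function.Bijective.comp ⟨fun x y h => ?_, fun r => ⟨ε.inv ≫ r, by simp⟩⟩
      (hWψ X hX)
    simpa using congrArg (fun z => ε.inv ≫ z) h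

end RouquierApprox

/-- Lemma 3.4. Let `T` be a triangulated category with a bounded
t-structure, `G` an object and `d > 0`. There exists `N = N(d) > 0` such that for
every integer `a` and every `F ∈ coprod_d(G(-∞,∞))` there are
`F' ∈ coprod_d(G(-∞,∞)) ∩ T^{≥ a - N}` and a map `F ⟶ F'` which is an isomorphism
in degrees `≥ a`. -/
theorem statement3 {C : Type*} [Category C] [Preadditive C] [HasZeroObject C] [HasShift C ℤ]
    [∀ (n : ℤ), (shiftFunctor C n).Additive] [Pretriangulated C]
    (t : TStructure C) (hb : IsBoundedTStructure t)
    (G : C) (d : ℕ) (hd : 0 < d) :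
    ∃ N : ℤ, 0 < N ∧ ∀ (a : ℤ) (F : C), F ∈ coprodLevel G d →
      ∃ (F' : C) (φ : F ⟶ F'),
        F' ∈ coprodLevel G d ∧ t.ge (a - N) F' ∧ IsIsoInDegreesGE t a φ := by
  obtain ⟨n, hn0, hLEG, hGEG⟩ := hb G
  obtain ⟨k, rfl⟩ : ∃ k, d = k + 1 := ⟨d - 1, by omega⟩
  clear hd
  suffices h : ∃ N : ℤ, 0 < N ∧ ∀ (a : ℤ) (F : C), F ∈ coprodLevel G (k+1) →
      ∃ (F' : C) (φ : F ⟶ F'), F' ∈ coprodLevel G (k+1) ∧ t.ge (a - N) F' ∧ W t a φ by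
    obtain ⟨N, hN, hmain⟩ := h
    refine ⟨N, hN, fun a F hF => ?_⟩
    obtain ⟨F', φ, h1, h2, h3⟩ := hmain a F hF
    exact ⟨F', φ, h1, h2, W.isIsoInDegreesGE t h3⟩
  induction k with
  | zero =>
      refine ⟨2*n+1, by omega, fun a F hF => ?_⟩
      exact base_approx t hLEG hGEG a hF
  | succ k ih =>
      obtain ⟨N, hN, happrox⟩ := ih
      refine ⟨(2*n+1) + N + 1, by omega, fun a F hF => ?_⟩
      obtain ⟨A, B, u, g, h, hA, hB, hdist⟩ := hF
      obtain ⟨B', ψ, hB'mem, hB'ge, hψ⟩ := base_approx t hLEG hGEG a hB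
      obtain ⟨A', α, hA'mem, hA'ge, hα⟩ := happrox (a - (2*n+1)) A hA
      obtain ⟨β, hβ⟩ := (hα B' hB'ge).surjective (u ≫ ψ)
      simp only at hβ
      obtain ⟨F', g', h', hdist'⟩ := Pretriangulated.distinguished_cocone_triangle β
      obtain ⟨φ, hφ₂, hφ₃⟩ := Pretriangulated.complete_distinguished_triangle_morphism
        (Triangle.mk u g h) (Triangle.mk β g' h') hdist hdist' α ψ hβ.symm
      refine ⟨F', φ, ⟨A', B', β, g', h', hA'mem, hB'mem, hdist'⟩, ?_, ?_⟩
      · refine ge_ext t _ (rot_of_distTriang _ hdist') ?_ ?_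
        · exact t.ge_antitone (by omega) B' hB'ge
        · have h1 : t.ge (a - (2*n+1) - N - 1) (A'⟦(1:ℤ)⟧) :=
            t.ge_shift (a - (2*n+1) - N) 1 (a - (2*n+1) - N - 1) (by omega) A' hA'ge
          exact t.ge_antitone (by omega) _ h1
      · refine W_step t (Triangle.mk u g h) (Triangle.mk β g' h') hdist hdist'
          α ψ φ hβ.symm hφ₂ hφ₃ ?_ hψ
        exact W_mono t (by omega) hα
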